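/- arXiv:1809.00967 — 2 statements merged into one kernel-verified Lean document; each statement's English description precedes it below -/
import Mathlib

section
/- Let A, B be maximal monotone operators on a real Hilbert space X, let λ > 0, and let (y_n, a_n, x_n, b_n) be sequences generated by the Douglas–Rachford method from initial points x₀, b₀ ∈ X. If there exists z ∈ X with 0 ∈ A(z) + B(z), then ‖x_n − x_{n−1}‖ → 0 and ‖b_n − b_{n−1}‖ → 0 as n → ∞. -/
open Filter Topology

/-- A set-valued operator `T` on `X` (identified with its graph) is monotone. -/
def IsMonotoneOp {X : Type*} [NormedAddCommGroup X] [InnerProductSpace ℝ X]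
    (T : Set (X × X)) : Prop :=
  ∀ p ∈ T, ∀ q ∈ T, (0 : ℝ) ≤ inner ℝ (p.1 - q.1) (p.2 - q.2)

/-- `T` is maximal monotone: monotone and maximal w.r.t. inclusion among monotone operators. -/
def IsMaxMonotone {X : Type*} [NormedAddCommGroup X] [InnerProductSpace ℝ X]
    (T : Set (X × X)) : Prop :=
  IsMonotoneOp T ∧ ∀ S : Set (X × X), IsMonotoneOp S → T ⊆ S → S = T

/-- Weak convergence of a sequence in an inner product space. -/
def WeakConv {X : Type*} [NormedAddCommGroup X] [InnerProductSpace ℝ X]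
    (u : ℕ → X) (l : X) : Prop :=
  ∀ v : X, Tendsto (fun n => (inner ℝ (u n) v : ℝ)) atTop (𝓝 (inner ℝ l v))

/-- The extended solution set `S_e(A,B) = {(z,w) : w ∈ B(z), -w ∈ A(z)}`. -/
def Se {X : Type*} [NormedAddCommGroup X] [InnerProductSpace ℝ X]
    (A B : Set (X × X)) : Set (X × X) :=
  {p | (p.1, p.2) ∈ B ∧ (p.1, -p.2) ∈ A}

/-- The sequences `(y n, a n, x n, b n)` (for `n ≥ 1`) are generated by the
Douglas–Rachford method with stepsize `lam` from initial points `x 0`, `b 0`: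
`a n ∈ A (y n)`, `lam • a n + y n = x (n-1) - lam • b (n-1)`,
`b n ∈ B (x n)`, `lam • b n + x n = y n + lam • b (n-1)`. -/
def IsDR {X : Type*} [NormedAddCommGroup X] [InnerProductSpace ℝ X]
    (A B : Set (X × X)) (lam : ℝ) (y a x b : ℕ → X) : Prop :=
  ∀ n, 1 ≤ n →
    (y n, a n) ∈ A ∧ lam • a n + y n = x (n - 1) - lam • b (n - 1) ∧
    (x n, b n) ∈ B ∧ lam • b n + x n = y n + lam • b (n - 1)


lemma dr_key_ineq {X : Type*} [NormedAddCommGroup X] [InnerProductSpace ℝ X]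
    (P P' Q Q' : X)
    (h1 : 0 ≤ (inner ℝ (P + Q - Q') (P' - P - Q) : ℝ))
    (h2 : 0 ≤ (inner ℝ P Q : ℝ))
    (h3 : 0 ≤ (inner ℝ (P - P') (Q - Q') : ℝ)) :
    ‖P - P'‖ ^ 2 + ‖Q - Q'‖ ^ 2 + (‖P‖ ^ 2 + ‖Q‖ ^ 2) ≤ ‖P'‖ ^ 2 + ‖Q'‖ ^ 2 := by
  simp only [inner_sub_left, inner_sub_right, inner_add_left, inner_add_right,
    real_inner_self_eq_norm_sq] at h1 h3
  rw [norm_sub_sq_real P P', norm_sub_sq_real Q Q']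
  nlinarith [real_inner_comm P Q, real_inner_comm P Q', real_inner_comm P' Q,
    real_inner_comm P P', real_inner_comm Q Q', real_inner_comm P' Q']

/-- If the monotone inclusion `0 ∈ A(z) + B(z)` has a solution, then in the
Douglas–Rachford method `‖x_n - x_{n-1}‖ → 0` and `‖b_n - b_{n-1}‖ → 0`. -/
theorem dr_item3 {X : Type*} [NormedAddCommGroup X] [InnerProductSpace ℝ X]
    [CompleteSpace X] (A B : Set (X × X))
    (hA : IsMaxMonotone A) (hB : IsMaxMonotone B)
    (lam : ℝ) (hlam : 0 < lam) (y a x b : ℕ → X) (hDR : IsDR A B lam y a x b)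
    (hsol : ∃ z u v : X, (z, u) ∈ A ∧ (z, v) ∈ B ∧ u + v = 0) :
    Tendsto (fun n => ‖x n - x (n - 1)‖) atTop (𝓝 0) ∧
    Tendsto (fun n => ‖b n - b (n - 1)‖) atTop (𝓝 0) := by
  obtain ⟨z, u, w, hzA, hzB, huw⟩ := hsol
  have hu : u = -w := eq_neg_of_add_eq_zero_left huw
  rw [hu] at hzA
  set φ : ℕ → ℝ := fun n => ‖x n - z‖ ^ 2 + ‖lam • (b n - w)‖ ^ 2 with hφ
  have hφ0 : ∀ n, 0 ≤ φ n := fun n => by positivity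
  set D : ℕ → ℝ := fun n => ‖x n - x (n - 1)‖ ^ 2 + ‖lam • (b n - b (n - 1))‖ ^ 2 with hD
  have hD0 : ∀ n, 0 ≤ D n := fun n => by positivity
  have key : ∀ n, 2 ≤ n → D n + φ n ≤ φ (n - 1) := by
    intro n hn
    obtain ⟨hyA, heq1, hxB, heq2⟩ := hDR n (by omega)
    obtain ⟨-, -, hxB', -⟩ := hDR (n - 1) (by omega)
    set P := x n - z
    set P' := x (n - 1) - z
    set Q := lam • (b n - w)
    set Q' := lam • (b (n - 1) - w)
    have hy : y n - z = P + Q - Q' := by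
      simp only [P, Q, Q', smul_sub]
      linear_combination (norm := module) -heq2
    have ha : lam • (a n + w) = P' - P - Q := by
      simp only [P, P', Q, smul_sub, smul_add]
      linear_combination (norm := module) heq1 + heq2
    have h1 : 0 ≤ (inner ℝ (P + Q - Q') (P' - P - Q) : ℝ) := by
      rw [← hy, ← ha, real_inner_smul_right]
      have := hA.1 (y n, a n) hyA (z, -w) hzA
      simp only [sub_neg_eq_add] at this
      exact mul_nonneg hlam.le this
    have h2 : 0 ≤ (inner ℝ P Q : ℝ) := by
      rw [real_inner_smul_right]
      exact mul_nonneg hlam.le (hB.1 (x n, b n) hxB (z, w) hzB)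
    have h3 : 0 ≤ (inner ℝ (P - P') (Q - Q') : ℝ) := by
      have hPP : P - P' = x n - x (n - 1) := by simp only [P, P']; abel
      have hQQ : Q - Q' = lam • (b n - b (n - 1)) := by
        simp only [Q, Q', smul_sub]; abel
      rw [hPP, hQQ, real_inner_smul_right]
      exact mul_nonneg hlam.le (hB.1 (x n, b n) hxB (x (n - 1), b (n - 1)) hxB')
    have hPP : P - P' = x n - x (n - 1) := by simp only [P, P']; abel
    have hQQ : Q - Q' = lam • (b n - b (n - 1)) := by
      simp only [Q, Q', smul_sub]; abel
    have := dr_key_ineq P P' Q Q' h1 h2 h3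
    rw [hPP, hQQ] at this
    simpa [D, φ, P, P', Q, Q'] using this
  -- summability
  set f : ℕ → ℝ := fun k => D (k + 2) with hf
  have hfle : ∀ k, f k ≤ φ (k + 1) - φ (k + 2) := by
    intro k
    have h := key (k + 2) (by omega)
    have e : (k + 2) - 1 = k + 1 := rfl
    rw [e] at h
    simp only [hf]
    linarith
  have hsum : ∀ N, ∑ k ∈ Finset.range N, f k ≤ φ 1 := by
    intro N
    calc ∑ k ∈ Finset.range N, f k
        ≤ ∑ k ∈ Finset.range N, (φ (k + 1) - φ (k + 2)) :=
          Finset.sum_le_sum fun k _ => hfle k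
      _ = φ 1 - φ (N + 1) := Finset.sum_range_sub' (fun k => φ (k + 1)) N
      _ ≤ φ 1 := by linarith [hφ0 (N + 1)]
  have hfsum : Summable f := summable_of_sum_range_le (fun k => hD0 _) hsum
  have hf0 : Tendsto f atTop (𝓝 0) := hfsum.tendsto_atTop_zero
  have hDtend : Tendsto D atTop (𝓝 0) := (tendsto_add_atTop_iff_nat 2).mp hf0
  have hx2 : Tendsto (fun n => ‖x n - x (n - 1)‖ ^ 2) atTop (𝓝 0) := by
    refine squeeze_zero (fun n => by positivity) (fun n => ?_) hDtend
    have h := sq_nonneg ‖lam • (b n - b (n - 1))‖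
    simp only [hD]; linarith
  have hb2 : Tendsto (fun n => ‖lam • (b n - b (n - 1))‖ ^ 2) atTop (𝓝 0) := by
    refine squeeze_zero (fun n => by positivity) (fun n => ?_) hDtend
    have h := sq_nonneg ‖x n - x (n - 1)‖
    simp only [hD]; linarith
  have hx : Tendsto (fun n => ‖x n - x (n - 1)‖) atTop (𝓝 0) := by
    have := hx2.sqrt
    simpa [Real.sqrt_sq (norm_nonneg _)] using this
  have hbs : Tendsto (fun n => ‖lam • (b n - b (n - 1))‖) atTop (𝓝 0) := by
    have := hb2.sqrt
    simpa [Real.sqrt_sq (norm_nonneg _)] using this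
  refine ⟨hx, ?_⟩
  have : Tendsto (fun n => lam⁻¹ * ‖lam • (b n - b (n - 1))‖) atTop (𝓝 (lam⁻¹ * 0)) :=
    hbs.const_mul _
  rw [mul_zero] at this
  refine this.congr fun n => ?_
  rw [norm_smul, Real.norm_eq_abs, abs_of_pos hlam, ← mul_assoc, inv_mul_cancel₀ hlam.ne',
    one_mul]
end

section
/- Let A, B be maximal monotone operators on a real Hilbert space X, let λ > 0, and let (y_n, a_n, x_n, b_n) be sequences generated by the Douglas–Rachford method from initial points x₀, b₀ ∈ X. If there exists z ∈ X with 0 ∈ A(z) + B(z), then there exists (z*, w*) ∈ S_e(A,B) such that y_n ⇀ z* and −a_n ⇀ w* weakly in X as n → ∞. -/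
open Filter Topology
open scoped RealInnerProductSpace

/-- Bounded sequences in a Hilbert space admit weakly convergent subsequences. -/
lemma exists_weak_subseq {X : Type*} [NormedAddCommGroup X] [InnerProductSpace ℝ X]
    [CompleteSpace X] (u : ℕ → X) (C : ℝ) (hu : ∀ n, ‖u n‖ ≤ C) :
    ∃ φ : ℕ → ℕ, StrictMono φ ∧ ∃ l : X,
      ∀ v : X, Tendsto (fun n => ⟪u (φ n), v⟫) atTop (𝓝 ⟪l, v⟫) := by
  have hC0 : 0 ≤ C := (norm_nonneg _).trans (hu 0)
  -- diagonal extraction via compactness of a product of intervals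
  have hK : IsCompact (Set.univ.pi fun _ : ℕ => Set.Icc (-(C*C)) (C*C)) :=
    isCompact_univ_pi fun _ => isCompact_Icc
  have hf : ∀ n, (fun m => ⟪u n, u m⟫) ∈ (Set.univ.pi fun _ : ℕ => Set.Icc (-(C*C)) (C*C)) := by
    intro n m _
    have h1 := abs_real_inner_le_norm (u n) (u m)
    have h2 : ‖u n‖ * ‖u m‖ ≤ C * C :=
      mul_le_mul (hu n) (hu m) (norm_nonneg _) hC0
    rw [Set.mem_Icc]
    cases abs_le.mp (h1.trans h2); constructor <;> linarith
  obtain ⟨g, _, φ, hφ, hconv⟩ := hK.tendsto_subseq hf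
  refine ⟨φ, hφ, ?_⟩
  have hpt : ∀ m, Tendsto (fun n => ⟪u (φ n), u m⟫) atTop (𝓝 (g m)) :=
    fun m => (tendsto_pi_nhds.mp hconv) m
  -- convergence of ⟪u (φ n), w⟫ for w in the span
  have hspan : ∀ w ∈ Submodule.span ℝ (Set.range u),
      ∃ r : ℝ, Tendsto (fun n => ⟪u (φ n), w⟫) atTop (𝓝 r) := by
    intro w hw
    induction hw using Submodule.span_induction with
    | mem w hw => obtain ⟨m, rfl⟩ := hw; exact ⟨g m, hpt m⟩
    | zero => exact ⟨0, by simp⟩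
    | add w w' _ _ hw hw' =>
        obtain ⟨r, hr⟩ := hw; obtain ⟨r', hr'⟩ := hw'
        exact ⟨r + r', by simpa [inner_add_right] using hr.add hr'⟩
    | smul c w _ hw =>
        obtain ⟨r, hr⟩ := hw
        exact ⟨c * r, by simpa [real_inner_smul_right] using hr.const_mul c⟩
  -- convergence for every v
  have hall : ∀ v : X, ∃ r : ℝ, Tendsto (fun n => ⟪u (φ n), v⟫) atTop (𝓝 r) := by
    set Y := (Submodule.span ℝ (Set.range u)).topologicalClosure with hYdef
    haveI : CompleteSpace Y := (Submodule.isClosed_topologicalClosure _).completeSpace_coe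
    have hmem : ∀ n, u n ∈ Y :=
      fun n => Submodule.le_topologicalClosure _ (Submodule.subset_span ⟨n, rfl⟩)
    intro v
    have hred : ∀ n, ⟪u n, v⟫ = ⟪u n, (Y.orthogonalProjectionOnto v : X)⟫ := by
      intro n
      have hz : ⟪u n, v - (Y.orthogonalProjectionOnto v : X)⟫ = 0 :=
        (Submodule.mem_orthogonal Y _).mp (Submodule.sub_starProjection_mem_orthogonal (K := Y) v)
          (u n) (hmem n)
      rw [inner_sub_right] at hz; linarith
    set w : X := (Y.orthogonalProjectionOnto v : X) with hwdef
    have hwY : w ∈ Y := (Y.orthogonalProjectionOnto v).2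
    -- Cauchy via approximation from the span
    have hcauchy : CauchySeq (fun n => ⟪u (φ n), w⟫) := by
      rw [Metric.cauchySeq_iff]
      intro ε hε
      have hwc : w ∈ closure ((Submodule.span ℝ (Set.range u)) : Set X) := hwY
      obtain ⟨w', hw'mem, hw'close⟩ := Metric.mem_closure_iff.mp hwc (ε / (4 * (C + 1)))
        (by positivity)
      obtain ⟨r, hr⟩ := hspan w' hw'mem
      have hrc : CauchySeq (fun n => ⟪u (φ n), w'⟫) := hr.cauchySeq
      rw [Metric.cauchySeq_iff] at hrc
      obtain ⟨N, hN⟩ := hrc (ε / 2) (by positivity)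
      refine ⟨N, fun m hm n hn => ?_⟩
      have key : ∀ k, |⟪u (φ k), w⟫ - ⟪u (φ k), w'⟫| ≤ ε / 4 := by
        intro k
        have : ⟪u (φ k), w⟫ - ⟪u (φ k), w'⟫ = ⟪u (φ k), w - w'⟫ := by
          rw [inner_sub_right]
        rw [this]
        have h1 := abs_real_inner_le_norm (u (φ k)) (w - w')
        have h2 : ‖u (φ k)‖ * ‖w - w'‖ ≤ C * (ε / (4 * (C + 1))) := by
          have hd : ‖w - w'‖ ≤ ε / (4 * (C + 1)) := by
            rw [← dist_eq_norm]; exact le_of_lt hw'close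
          exact mul_le_mul (hu _) hd (norm_nonneg _) hC0
        have h3 : C * (ε / (4 * (C + 1))) ≤ ε / 4 := by
          have hC1 : (0:ℝ) < C + 1 := by linarith
          calc C * (ε / (4 * (C + 1))) ≤ (C + 1) * (ε / (4 * (C + 1))) :=
                mul_le_mul_of_nonneg_right (by linarith) (by positivity)
            _ = ε / 4 := by field_simp
        linarith [h1.trans h2]
      have hmn := hN m hm n hn
      rw [Real.dist_eq] at *
      have k1 := key m; have k2 := key n
      have : |⟪u (φ m), w⟫ - ⟪u (φ n), w⟫| ≤
          |⟪u (φ m), w⟫ - ⟪u (φ m), w'⟫| + |⟪u (φ m), w'⟫ - ⟪u (φ n), w'⟫|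
          + |⟪u (φ n), w'⟫ - ⟪u (φ n), w⟫| := by
        linarith [abs_sub_le (⟪u (φ m), w⟫) (⟪u (φ m), w'⟫) (⟪u (φ n), w⟫),
          abs_sub_le (⟪u (φ m), w'⟫) (⟪u (φ n), w'⟫) (⟪u (φ n), w⟫)]
      rw [abs_sub_comm (⟪u (φ n), w'⟫)] at this
      linarith
    obtain ⟨r, hr⟩ := cauchySeq_tendsto_of_complete hcauchy
    exact ⟨r, by simpa only [hred] using hr⟩
  -- build the weak limit via Riesz representation
  choose r hr using hall
  have hadd : ∀ v v', r (v + v') = r v + r v' := by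
    intro v v'
    refine tendsto_nhds_unique (hr (v + v')) ?_
    simpa [inner_add_right] using (hr v).add (hr v')
  have hsmul : ∀ (c : ℝ) v, r (c • v) = c * r v := by
    intro c v
    refine tendsto_nhds_unique (hr (c • v)) ?_
    simpa [real_inner_smul_right] using (hr v).const_mul c
  have hbdd : ∀ v, |r v| ≤ C * ‖v‖ := by
    intro v
    have h1 : Tendsto (fun n => |⟪u (φ n), v⟫|) atTop (𝓝 |r v|) := (hr v).abs
    refine le_of_tendsto h1 (Eventually.of_forall fun n => ?_)
    exact (abs_real_inner_le_norm _ _).trans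
      (mul_le_mul_of_nonneg_right (hu _) (norm_nonneg _))
  let L : X →ₗ[ℝ] ℝ :=
    { toFun := r
      map_add' := hadd
      map_smul' := hsmul }
  let Lc : X →L[ℝ] ℝ := L.mkContinuous C fun v => by
    simpa [L, Real.norm_eq_abs] using hbdd v
  refine ⟨(InnerProductSpace.toDual ℝ X).symm Lc, fun v => ?_⟩
  have : ⟪(InnerProductSpace.toDual ℝ X).symm Lc, v⟫ = Lc v :=
    InnerProductSpace.toDual_symm_apply
  rw [this]
  exact hr v

private lemma le_of_sq_le_mul' {a b : ℝ} (ha : 0 ≤ a) (hb : 0 ≤ b) (h : a^2 ≤ a * b) :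
    a ≤ b := by nlinarith

private lemma key_inner_identity {X : Type*} [NormedAddCommGroup X] [InnerProductSpace ℝ X]
    (lam : ℝ) (p q α β : X) (hq : q = p + lam • (α + β)) :
    ⟪lam • (α + β), p + lam • β⟫ = lam * (⟪p, α⟫ + ⟪q, β⟫) := by
  subst hq
  simp only [inner_add_left, inner_add_right, real_inner_smul_left, real_inner_smul_right,
    real_inner_comm β α, real_inner_comm β p, real_inner_comm α p]
  ring

set_option maxHeartbeats 3000000 in
/-- Main theorem, second part: `(y_n, -a_n)` converges weakly to a point of `S_e(A,B)`. -/
theorem dr_weak_convergence_ya {X : Type*} [NormedAddCommGroup X] [InnerProductSpace ℝ X]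
    [CompleteSpace X] (A B : Set (X × X))
    (hA : IsMaxMonotone A) (hB : IsMaxMonotone B)
    (lam : ℝ) (hlam : 0 < lam) (y a x b : ℕ → X) (hDR : IsDR A B lam y a x b)
    (hsol : ∃ z u v : X, (z, u) ∈ A ∧ (z, v) ∈ B ∧ u + v = 0) :
    ∃ zstar wstar : X, (zstar, wstar) ∈ Se A B ∧
      WeakConv y zstar ∧ WeakConv (fun n => -a n) wstar := by
  obtain ⟨z, u0, w, hzA0, hzB, hu0w⟩ := hsol
  have hzA : (z, -w) ∈ A := by
    have : u0 = -w := by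
      have := hu0w; exact eq_neg_of_add_eq_zero_left this
    rwa [this] at hzA0
  -- basic recursion facts at shifted indices
  have hrec : ∀ k : ℕ, (y (k+1), a (k+1)) ∈ A ∧
      lam • a (k+1) + y (k+1) = x k - lam • b k ∧
      (x (k+1), b (k+1)) ∈ B ∧
      lam • b (k+1) + x (k+1) = y (k+1) + lam • b k := by
    intro k
    have := hDR (k+1) (Nat.le_add_left 1 k)
    simpa using this
  set s : ℕ → X := fun n => x n + lam • b n with hsdef
  have hsn : ∀ n, s n = x n + lam • b n := fun n => rfl
  -- small helper: inner product with strongly-null sequence tends to zero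
  have hinner0 : ∀ (d : ℕ → X) (v : X), Tendsto d atTop (𝓝 0) →
      Tendsto (fun k => ⟪d k, v⟫) atTop (𝓝 0) := by
    intro d v hd
    refine squeeze_zero_norm (a := fun k => ‖d k‖ * ‖v‖) (fun k => ?_) ?_
    · simpa [Real.norm_eq_abs] using abs_real_inner_le_norm (d k) v
    · simpa using hd.norm.mul_const ‖v‖
  -- the key Fejér-type inequality, for any point of the extended solution set
  have hkey : ∀ z' w', (z', w') ∈ B → (z', -w') ∈ A → ∀ k : ℕ,
      ‖s (k+2) - (z' + lam • w')‖^2 + ‖s (k+1) - s (k+2)‖^2 ≤ ‖s (k+1) - (z' + lam • w')‖^2 := by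
    intro z' w' hBz hAz k
    obtain ⟨hyA, heq1, hxB2, heq2⟩ := hrec (k+1)
    obtain ⟨_, _, hxB1, _⟩ := hrec k
    have hα : (0:ℝ) ≤ ⟪y (k+2) - z', a (k+2) + w'⟫ := by
      have := hA.1 _ hyA _ hAz
      simpa [sub_neg_eq_add] using this
    have hβ : (0:ℝ) ≤ ⟪x (k+1) - z', b (k+1) - w'⟫ := by
      simpa using hB.1 _ hxB1 _ hBz
    have h1 : s (k+1) - s (k+2) = lam • ((a (k+2) + w') + (b (k+1) - w')) := by
      show (x (k+1) + lam • b (k+1)) - (x (k+2) + lam • b (k+2)) = _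
      linear_combination (norm := module) -heq1 - heq2
    have h2 : s (k+2) - (z' + lam • w') = (y (k+2) - z') + lam • (b (k+1) - w') := by
      show (x (k+2) + lam • b (k+2)) - (z' + lam • w') = _
      linear_combination (norm := module) heq2
    have h3 : x (k+1) - z' = (y (k+2) - z') + lam • ((a (k+2) + w') + (b (k+1) - w')) := by
      linear_combination (norm := module) -heq1
    have hinner : ⟪s (k+1) - s (k+2), s (k+2) - (z' + lam • w')⟫
        = lam * (⟪y (k+2) - z', a (k+2) + w'⟫ + ⟪x (k+1) - z', b (k+1) - w'⟫) := by
      rw [h1, h2]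
      exact key_inner_identity lam _ _ _ _ h3
    have hexp : ‖s (k+1) - (z' + lam • w')‖^2 = ‖s (k+1) - s (k+2)‖^2
        + 2*⟪s (k+1) - s (k+2), s (k+2) - (z' + lam • w')⟫ + ‖s (k+2) - (z' + lam • w')‖^2 := by
      have hdecomp : s (k+1) - (z' + lam • w')
          = (s (k+1) - s (k+2)) + (s (k+2) - (z' + lam • w')) := by abel
      rw [hdecomp, norm_add_sq_real]
    have hpos : (0:ℝ) ≤ lam * (⟪y (k+2) - z', a (k+2) + w'⟫ + ⟪x (k+1) - z', b (k+1) - w'⟫) :=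
      mul_nonneg hlam.le (add_nonneg hα hβ)
    rw [hexp, hinner]
    linarith
  -- Fejér monotonicity and summability for the fixed solution (z, w)
  have hdec := hkey z w hzB hzA
  set S1 : ℝ := ‖s 1 - (z + lam • w)‖ with hS1def
  have hbound : ∀ N, (∑ k ∈ Finset.range N, ‖s (k+1) - s (k+2)‖^2)
      + ‖s (N+1) - (z + lam • w)‖^2 ≤ S1^2 := by
    intro N
    induction N with
    | zero => simp [hS1def]
    | succ n ih =>
        rw [Finset.sum_range_succ]
        have := hdec n
        linarith
  have hsum : Summable (fun k => ‖s (k+1) - s (k+2)‖^2) := by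
    apply summable_of_sum_range_le (c := S1^2) (fun k => by positivity)
    intro N
    have := hbound N
    nlinarith [sq_nonneg ‖s (N+1) - (z + lam • w)‖]
  have hd2 : Tendsto (fun k => ‖s (k+1) - s (k+2)‖^2) atTop (𝓝 0) := hsum.tendsto_atTop_zero
  have hdn : Tendsto (fun k => ‖s (k+1) - s (k+2)‖) atTop (𝓝 0) := by
    have h := (Real.continuous_sqrt.tendsto 0).comp hd2
    simp only [Function.comp_def, Real.sqrt_zero] at h
    exact h.congr fun k => Real.sqrt_sq (norm_nonneg _)
  have hds : Tendsto (fun k => s (k+1) - s (k+2)) atTop (𝓝 0) :=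
    tendsto_zero_iff_norm_tendsto_zero.mpr hdn
  have hds' : Tendsto (fun k => s (k+2) - s (k+1)) atTop (𝓝 0) := by
    simpa [neg_sub] using hds.neg
  -- resolvent contraction: x differences controlled by s differences
  have hxcontr : ∀ k, ‖x (k+2) - x (k+1)‖ ≤ ‖s (k+2) - s (k+1)‖ := by
    intro k
    have hmono : (0:ℝ) ≤ ⟪x (k+2) - x (k+1), b (k+2) - b (k+1)⟫ := by
      simpa using hB.1 _ (hrec (k+1)).2.2.1 _ (hrec k).2.2.1
    have hrel : s (k+2) - s (k+1) = (x (k+2) - x (k+1)) + lam • (b (k+2) - b (k+1)) := by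
      show (x (k+2) + lam • b (k+2)) - (x (k+1) + lam • b (k+1)) = _
      module
    have h1 : ‖x (k+2) - x (k+1)‖^2 ≤ ⟪x (k+2) - x (k+1), s (k+2) - s (k+1)⟫ := by
      rw [hrel, inner_add_right, real_inner_smul_right, real_inner_self_eq_norm_sq]
      nlinarith
    exact le_of_sq_le_mul' (norm_nonneg _) (norm_nonneg _)
      (h1.trans (real_inner_le_norm _ _))
  have hdn' : Tendsto (fun k => ‖s (k+2) - s (k+1)‖) atTop (𝓝 0) := by
    refine hdn.congr fun k => ?_
    rw [← norm_neg]; congr 1; abel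
  have hx0 : Tendsto (fun k => x (k+2) - x (k+1)) atTop (𝓝 0) := by
    rw [tendsto_zero_iff_norm_tendsto_zero]
    exact squeeze_zero (fun k => norm_nonneg _) hxcontr hdn'
  have hb0 : Tendsto (fun k => b (k+2) - b (k+1)) atTop (𝓝 0) := by
    have hrel : ∀ k, b (k+2) - b (k+1)
        = (1/lam) • ((s (k+2) - s (k+1)) - (x (k+2) - x (k+1))) := by
      intro k
      have hl : lam • (b (k+2) - b (k+1)) = (s (k+2) - s (k+1)) - (x (k+2) - x (k+1)) := by
        show _ = ((x (k+2) + lam • b (k+2)) - (x (k+1) + lam • b (k+1))) - _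
        module
      rw [← hl, smul_smul, one_div, inv_mul_cancel₀ hlam.ne', one_smul]
    have h := (hds'.sub hx0).const_smul (1/lam)
    simp only [sub_zero, smul_zero] at h
    exact h.congr fun k => (hrel k).symm
  have hyx0 : Tendsto (fun k => y (k+2) - x (k+2)) atTop (𝓝 0) := by
    have hrel : ∀ k, y (k+2) - x (k+2) = lam • (b (k+2) - b (k+1)) := by
      intro k
      linear_combination (norm := module) -(hrec (k+1)).2.2.2
    have h := hb0.const_smul lam
    simp only [smul_zero] at h
    exact h.congr fun k => (hrel k).symm
  have hab1 : ∀ k, lam • (a (k+2) + b (k+1)) = s (k+1) - s (k+2) := by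
    intro k
    obtain ⟨_, heq1, _, heq2⟩ := hrec (k+1)
    show _ = (x (k+1) + lam • b (k+1)) - (x (k+2) + lam • b (k+2))
    linear_combination (norm := module) heq1 + heq2
  have hab0 : Tendsto (fun k => a (k+2) + b (k+2)) atTop (𝓝 0) := by
    have hrel : ∀ k, a (k+2) + b (k+2)
        = (1/lam) • (s (k+1) - s (k+2)) + (b (k+2) - b (k+1)) := by
      intro k
      rw [← hab1 k, smul_smul, one_div, inv_mul_cancel₀ hlam.ne', one_smul]
      abel
    have h := (hds.const_smul (1/lam)).add hb0
    simp only [smul_zero, add_zero] at h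
    exact h.congr fun k => (hrel k).symm
  -- norm bounds
  have hsmono : ∀ z' w', (z', w') ∈ B → (z', -w') ∈ A → ∀ k,
      ‖s (k+2) - (z' + lam • w')‖ ≤ ‖s (k+1) - (z' + lam • w')‖ := by
    intro z' w' hBz hAz k
    have := hkey z' w' hBz hAz k
    nlinarith [norm_nonneg (s (k+2) - (z' + lam • w')), norm_nonneg (s (k+1) - (z' + lam • w')),
      sq_nonneg ‖s (k+1) - s (k+2)‖]
  have hsB : ∀ k, ‖s (k+1) - (z + lam • w)‖ ≤ S1 := by
    intro k
    induction k with
    | zero => exact le_refl _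
    | succ n ih => exact (hsmono z w hzB hzA n).trans ih
  set Ms : ℝ := S1 + ‖z + lam • w‖ with hMsdef
  have hsb : ∀ k, ‖s (k+1)‖ ≤ Ms := by
    intro k
    calc ‖s (k+1)‖ = ‖(s (k+1) - (z + lam • w)) + (z + lam • w)‖ := by congr 1; abel
      _ ≤ ‖s (k+1) - (z + lam • w)‖ + ‖z + lam • w‖ := norm_add_le _ _
      _ ≤ S1 + ‖z + lam • w‖ := by linarith [hsB k]
  have hxz : ∀ k, ‖x (k+1) - z‖ ≤ ‖s (k+1) - (z + lam • w)‖ := by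
    intro k
    have hmono : (0:ℝ) ≤ ⟪x (k+1) - z, b (k+1) - w⟫ := by
      simpa using hB.1 _ (hrec k).2.2.1 _ hzB
    have hrel : s (k+1) - (z + lam • w) = (x (k+1) - z) + lam • (b (k+1) - w) := by
      show (x (k+1) + lam • b (k+1)) - (z + lam • w) = _
      module
    have h1 : ‖x (k+1) - z‖^2 ≤ ⟪x (k+1) - z, s (k+1) - (z + lam • w)⟫ := by
      rw [hrel, inner_add_right, real_inner_smul_right, real_inner_self_eq_norm_sq]
      nlinarith
    exact le_of_sq_le_mul' (norm_nonneg _) (norm_nonneg _)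
      (h1.trans (real_inner_le_norm _ _))
  set Mx : ℝ := S1 + ‖z‖ with hMxdef
  have hxb : ∀ k, ‖x (k+1)‖ ≤ Mx := by
    intro k
    calc ‖x (k+1)‖ = ‖(x (k+1) - z) + z‖ := by congr 1; abel
      _ ≤ ‖x (k+1) - z‖ + ‖z‖ := norm_add_le _ _
      _ ≤ S1 + ‖z‖ := by linarith [(hxz k).trans (hsB k)]
  set Mb : ℝ := (1/lam) * (Ms + Mx) with hMbdef
  have hbb : ∀ k, ‖b (k+1)‖ ≤ Mb := by
    intro k
    have hrel : b (k+1) = (1/lam) • (s (k+1) - x (k+1)) := by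
      have hl : lam • b (k+1) = s (k+1) - x (k+1) := by
        show _ = (x (k+1) + lam • b (k+1)) - x (k+1); abel
      rw [← hl, smul_smul, one_div, inv_mul_cancel₀ hlam.ne', one_smul]
    rw [hrel, norm_smul]
    have : ‖s (k+1) - x (k+1)‖ ≤ Ms + Mx :=
      (norm_sub_le _ _).trans (add_le_add (hsb k) (hxb k))
    have h1 : ‖(1:ℝ)/lam‖ = 1/lam := by
      rw [Real.norm_eq_abs, abs_of_pos (by positivity)]
    rw [h1]
    exact mul_le_mul_of_nonneg_left this (by positivity)
  set My : ℝ := Ms + lam * Mb with hMydef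
  have hyb : ∀ k, ‖y (k+2)‖ ≤ My := by
    intro k
    have hrel : y (k+2) = s (k+2) - lam • b (k+1) := by
      obtain ⟨_, _, _, heq2⟩ := hrec (k+1)
      show _ = (x (k+2) + lam • b (k+2)) - lam • b (k+1)
      linear_combination (norm := module) -heq2
    rw [hrel]
    calc ‖s (k+2) - lam • b (k+1)‖ ≤ ‖s (k+2)‖ + ‖lam • b (k+1)‖ := norm_sub_le _ _
      _ ≤ Ms + lam * Mb := by
          have h1 : ‖lam • b (k+1)‖ = lam * ‖b (k+1)‖ := by
            rw [norm_smul, Real.norm_eq_abs, abs_of_pos hlam]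
          rw [h1]
          exact add_le_add (hsb (k+1)) (mul_le_mul_of_nonneg_left (hbb k) hlam.le)
  -- quadratic limit: ⟪y, a⟫ + ⟪x, b⟫ → 0
  have hquad : Tendsto (fun k => ⟪y (k+2), a (k+2)⟫ + ⟪x (k+2), b (k+2)⟫) atTop (𝓝 0) := by
    have hid : ∀ k, ⟪y (k+2), a (k+2)⟫ + ⟪x (k+2), b (k+2)⟫
        = ⟪y (k+2), a (k+2) + b (k+2)⟫ - ⟪y (k+2) - x (k+2), b (k+2)⟫ := by
      intro k
      rw [inner_add_right, inner_sub_left]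
      ring
    have h1 : Tendsto (fun k => ⟪y (k+2), a (k+2) + b (k+2)⟫) atTop (𝓝 0) := by
      refine squeeze_zero_norm (a := fun k => My * ‖a (k+2) + b (k+2)‖) (fun k => ?_) ?_
      · simpa [Real.norm_eq_abs] using (abs_real_inner_le_norm (y (k+2)) (a (k+2) + b (k+2))).trans
          (mul_le_mul_of_nonneg_right (hyb k) (norm_nonneg _))
      · simpa using hab0.norm.const_mul My
    have h2 : Tendsto (fun k => ⟪y (k+2) - x (k+2), b (k+2)⟫) atTop (𝓝 0) := by
      refine squeeze_zero_norm (a := fun k => ‖y (k+2) - x (k+2)‖ * Mb) (fun k => ?_) ?_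
      · show |⟪y (k+2) - x (k+2), b (k+2)⟫| ≤ _
        calc |⟪y (k+2) - x (k+2), b (k+2)⟫| ≤ ‖y (k+2) - x (k+2)‖ * ‖b (k+2)‖ :=
              abs_real_inner_le_norm _ _
          _ ≤ ‖y (k+2) - x (k+2)‖ * Mb :=
              mul_le_mul_of_nonneg_left (hbb (k+1)) (norm_nonneg _)
      · simpa using hyx0.norm.mul_const Mb
    have h := h1.sub h2
    simp only [sub_zero] at h
    exact h.congr fun k => (hid k).symm
  -- identification of weak cluster points as extended solutions
  have hident : ∀ (θ : ℕ → ℕ), StrictMono θ → ∀ xb bb : X,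
      (∀ v, Tendsto (fun k => ⟪x (θ k + 2), v⟫) atTop (𝓝 ⟪xb, v⟫)) →
      (∀ v, Tendsto (fun k => ⟪b (θ k + 2), v⟫) atTop (𝓝 ⟪bb, v⟫)) →
      (xb, bb) ∈ B ∧ (xb, -bb) ∈ A := by
    intro θ hθ xb bb hwx hwb
    have hθt : Tendsto θ atTop atTop := hθ.tendsto_atTop
    have hyx0' : Tendsto (fun k => y (θ k + 2) - x (θ k + 2)) atTop (𝓝 0) := hyx0.comp hθt
    have hab0' : Tendsto (fun k => a (θ k + 2) + b (θ k + 2)) atTop (𝓝 0) := hab0.comp hθt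
    have hquad' : Tendsto (fun k => ⟪y (θ k + 2), a (θ k + 2)⟫ + ⟪x (θ k + 2), b (θ k + 2)⟫)
        atTop (𝓝 0) := hquad.comp hθt
    have hwy : ∀ v, Tendsto (fun k => ⟪y (θ k + 2), v⟫) atTop (𝓝 ⟪xb, v⟫) := by
      intro v
      have h := (hwx v).add (hinner0 _ v hyx0')
      simp only [add_zero] at h
      exact h.congr fun k => by rw [inner_sub_left]; ring
    have hwa : ∀ v, Tendsto (fun k => ⟪a (θ k + 2), v⟫) atTop (𝓝 ⟪-bb, v⟫) := by
      intro v
      have h := (hinner0 _ v hab0').sub (hwb v)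
      simp only [zero_sub] at h
      have h2 : Tendsto (fun k => ⟪a (θ k + 2), v⟫) atTop (𝓝 (-⟪bb, v⟫)) :=
        h.congr fun k => by rw [inner_add_left]; ring
      simpa [inner_neg_left] using h2
    -- the limiting inequality against arbitrary graph points
    have hlimineq : ∀ p₁ s₁ q₁ r₁ : X, (p₁, s₁) ∈ A → (q₁, r₁) ∈ B →
        0 ≤ ⟪xb - p₁, -bb - s₁⟫ + ⟪xb - q₁, bb - r₁⟫ := by
      intro p₁ s₁ q₁ r₁ hpA hqB
      have hterm : ∀ k, 0 ≤ ⟪y (θ k + 2) - p₁, a (θ k + 2) - s₁⟫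
          + ⟪x (θ k + 2) - q₁, b (θ k + 2) - r₁⟫ := by
        intro k
        have t1 : (0:ℝ) ≤ ⟪y (θ k + 2) - p₁, a (θ k + 2) - s₁⟫ := by
          simpa using hA.1 _ (hrec (θ k + 1)).1 _ hpA
        have t2 : (0:ℝ) ≤ ⟪x (θ k + 2) - q₁, b (θ k + 2) - r₁⟫ := by
          simpa using hB.1 _ (hrec (θ k + 1)).2.2.1 _ hqB
        linarith
      have hlim : Tendsto (fun k => ⟪y (θ k + 2) - p₁, a (θ k + 2) - s₁⟫
          + ⟪x (θ k + 2) - q₁, b (θ k + 2) - r₁⟫) atTop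
          (𝓝 (0 - ⟪xb, s₁⟫ - ⟪-bb, p₁⟫ + ⟪p₁, s₁⟫ - ⟪xb, r₁⟫ - ⟪bb, q₁⟫ + ⟪q₁, r₁⟫)) := by
        have h := (((((hquad'.sub (hwy s₁)).sub (hwa p₁)).add
          (tendsto_const_nhds (x := ⟪p₁, s₁⟫))).sub (hwx r₁)).sub (hwb q₁)).add
          (tendsto_const_nhds (x := ⟪q₁, r₁⟫))
        refine h.congr fun k => ?_
        simp only [inner_sub_left, inner_sub_right,
          real_inner_comm (a (θ k + 2)) p₁, real_inner_comm (b (θ k + 2)) q₁]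
        ring
      have h0 := ge_of_tendsto' hlim hterm
      have hexp : ⟪xb - p₁, -bb - s₁⟫ + ⟪xb - q₁, bb - r₁⟫
          = 0 - ⟪xb, s₁⟫ - ⟪-bb, p₁⟫ + ⟪p₁, s₁⟫ - ⟪xb, r₁⟫ - ⟪bb, q₁⟫ + ⟪q₁, r₁⟫ := by
        simp only [inner_sub_left, inner_sub_right, inner_neg_left, inner_neg_right,
          real_inner_comm bb p₁, real_inner_comm bb q₁]
        ring
      rw [hexp]
      exact h0
    -- first: xb is monotonically related to A with value -bb
    have hstep : ∀ p₁ s₁ : X, (p₁, s₁) ∈ A → 0 ≤ ⟪xb - p₁, -bb - s₁⟫ := by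
      intro p₁ s₁ hpA
      by_contra hneg
      push_neg at hneg
      have hBrel : ∀ q₁ r₁ : X, (q₁, r₁) ∈ B → 0 ≤ ⟪xb - q₁, bb - r₁⟫ := by
        intro q₁ r₁ hq
        have := hlimineq p₁ s₁ q₁ r₁ hpA hq
        linarith
      have hxbB : (xb, bb) ∈ B := by
        have hmono : IsMonotoneOp (insert (xb, bb) B) := by
          rintro P (hP | hP) Q (hQ | hQ)
          · subst hP; subst hQ; simp
          · subst hP; simpa using hBrel Q.1 Q.2 hQ
          · subst hQ
            have h := hBrel P.1 P.2 hP
            have h2 : (0:ℝ) ≤ ⟪-(xb - P.1), -(bb - P.2)⟫ := by rwa [inner_neg_neg]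
            simpa [neg_sub] using h2
          · exact hB.1 P hP Q hQ
        have := hB.2 _ hmono (Set.subset_insert _ _)
        rw [← this]; exact Set.mem_insert _ _
      have h := hlimineq p₁ s₁ xb bb hpA hxbB
      simp only [sub_self, inner_zero_left, add_zero] at h
      linarith
    have hxbA : (xb, -bb) ∈ A := by
      have hmono : IsMonotoneOp (insert (xb, -bb) A) := by
        rintro P (hP | hP) Q (hQ | hQ)
        · subst hP; subst hQ; simp
        · subst hP; simpa using hstep Q.1 Q.2 hQ
        · subst hQ
          have h := hstep P.1 P.2 hP
          have h2 : (0:ℝ) ≤ ⟪-(xb - P.1), -(-bb - P.2)⟫ := by rwa [inner_neg_neg]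
          simpa [neg_sub] using h2
        · exact hA.1 P hP Q hQ
      have := hA.2 _ hmono (Set.subset_insert _ _)
      rw [← this]; exact Set.mem_insert _ _
    have hxbB : (xb, bb) ∈ B := by
      have hBrel : ∀ q₁ r₁ : X, (q₁, r₁) ∈ B → 0 ≤ ⟪xb - q₁, bb - r₁⟫ := by
        intro q₁ r₁ hq
        have h := hlimineq xb (-bb) q₁ r₁ hxbA hq
        simp only [sub_self, inner_zero_left, zero_add] at h
        exact h
      have hmono : IsMonotoneOp (insert (xb, bb) B) := by
        rintro P (hP | hP) Q (hQ | hQ)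
        · subst hP; subst hQ; simp
        · subst hP; simpa using hBrel Q.1 Q.2 hQ
        · subst hQ
          have h := hBrel P.1 P.2 hP
          have h2 : (0:ℝ) ≤ ⟪-(xb - P.1), -(bb - P.2)⟫ := by rwa [inner_neg_neg]
          simpa [neg_sub] using h2
        · exact hB.1 P hP Q hQ
      have := hB.2 _ hmono (Set.subset_insert _ _)
      rw [← this]; exact Set.mem_insert _ _
    exact ⟨hxbB, hxbA⟩
  -- existence of weakly convergent sub-subsequences
  have hclus : ∀ ψ : ℕ → ℕ, StrictMono ψ → ∃ θ' : ℕ → ℕ, StrictMono θ' ∧ ∃ xc bc : X,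
      (∀ v, Tendsto (fun k => ⟪x (ψ (θ' k) + 2), v⟫) atTop (𝓝 ⟪xc, v⟫)) ∧
      (∀ v, Tendsto (fun k => ⟪b (ψ (θ' k) + 2), v⟫) atTop (𝓝 ⟪bc, v⟫)) := by
    intro ψ hψ
    obtain ⟨φ₁, hφ₁, xc, hxcw⟩ := exists_weak_subseq (fun k => x (ψ k + 2)) Mx
      (fun k => hxb (ψ k + 1))
    obtain ⟨φ₂, hφ₂, bc, hbcw⟩ := exists_weak_subseq (fun k => b (ψ (φ₁ k) + 2)) Mb
      (fun k => hbb (ψ (φ₁ k) + 1))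
    refine ⟨φ₁ ∘ φ₂, hφ₁.comp hφ₂, xc, bc, ?_, ?_⟩
    · intro v
      exact (hxcw v).comp hφ₂.tendsto_atTop
    · intro v
      exact hbcw v
  -- convergence of distances to extended solutions
  have hnormlim : ∀ z' w', (z', w') ∈ B → (z', -w') ∈ A →
      ∃ L : ℝ, Tendsto (fun k => ‖s (k+1) - (z' + lam • w')‖) atTop (𝓝 L) := by
    intro z' w' hBz hAz
    have hanti : Antitone (fun k => ‖s (k+1) - (z' + lam • w')‖) :=
      antitone_nat_of_succ_le (fun n => hsmono z' w' hBz hAz n)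
    have hbdd : BddBelow (Set.range (fun k => ‖s (k+1) - (z' + lam • w')‖)) := by
      refine ⟨0, ?_⟩
      rintro r ⟨k, rfl⟩
      exact norm_nonneg _
    exact ⟨_, tendsto_atTop_ciInf hanti hbdd⟩
  -- uniqueness of weak cluster points
  have huniq : ∀ xc bc xc' bc' : X, (xc, bc) ∈ B → (xc, -bc) ∈ A →
      (xc', bc') ∈ B → (xc', -bc') ∈ A →
      (∃ θ : ℕ → ℕ, StrictMono θ ∧ (∀ v, Tendsto (fun k => ⟪x (θ k + 2), v⟫) atTop (𝓝 ⟪xc, v⟫)) ∧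
        (∀ v, Tendsto (fun k => ⟪b (θ k + 2), v⟫) atTop (𝓝 ⟪bc, v⟫))) →
      (∃ θ : ℕ → ℕ, StrictMono θ ∧ (∀ v, Tendsto (fun k => ⟪x (θ k + 2), v⟫) atTop (𝓝 ⟪xc', v⟫)) ∧
        (∀ v, Tendsto (fun k => ⟪b (θ k + 2), v⟫) atTop (𝓝 ⟪bc', v⟫))) →
      xc = xc' ∧ bc = bc' := by
    rintro xc bc xc' bc' hxcB hxcA hxc'B hxc'A ⟨θ, hθ, hwx1, hwb1⟩ ⟨θ', hθ', hwx2, hwb2⟩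
    obtain ⟨L, hL⟩ := hnormlim xc bc hxcB hxcA
    obtain ⟨L', hL'⟩ := hnormlim xc' bc' hxc'B hxc'A
    set σ : X := xc + lam • bc with hσdef
    set σ' : X := xc' + lam • bc' with hσ'def
    have hIC : Tendsto (fun k => ⟪s (k+1), σ - σ'⟫) atTop
        (𝓝 ((‖σ‖^2 - ‖σ'‖^2 - (L^2 - L'^2))/2)) := by
      have hL2 := hL.pow 2
      have hL'2 := hL'.pow 2
      have h := ((tendsto_const_nhds (x := ‖σ‖^2 - ‖σ'‖^2)).sub (hL2.sub hL'2)).div_const 2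
      refine h.congr fun k => ?_
      have e1 : ‖s (k+1) - σ‖^2 = ‖s (k+1)‖^2 - 2*⟪s (k+1), σ⟫ + ‖σ‖^2 := norm_sub_sq_real _ _
      have e2 : ‖s (k+1) - σ'‖^2 = ‖s (k+1)‖^2 - 2*⟪s (k+1), σ'⟫ + ‖σ'‖^2 := norm_sub_sq_real _ _
      rw [e1, e2, inner_sub_right]
      ring
    have hsub : ∀ (θ₁ : ℕ → ℕ), StrictMono θ₁ → ∀ (xd bd : X),
        (∀ v, Tendsto (fun k => ⟪x (θ₁ k + 2), v⟫) atTop (𝓝 ⟪xd, v⟫)) →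
        (∀ v, Tendsto (fun k => ⟪b (θ₁ k + 2), v⟫) atTop (𝓝 ⟪bd, v⟫)) →
        ⟪xd + lam • bd, σ - σ'⟫ = (‖σ‖^2 - ‖σ'‖^2 - (L^2 - L'^2))/2 := by
      intro θ₁ hθ₁ xd bd hwxd hwbd
      have h1 : Tendsto (fun k => ⟪s (θ₁ k + 2), σ - σ'⟫) atTop
          (𝓝 ⟪xd + lam • bd, σ - σ'⟫) := by
        have h := (hwxd (σ - σ')).add ((hwbd (σ - σ')).const_mul lam)
        have heq : ⟪xd, σ - σ'⟫ + lam * ⟪bd, σ - σ'⟫ = ⟪xd + lam • bd, σ - σ'⟫ := by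
          rw [inner_add_left, real_inner_smul_left]
        rw [heq] at h
        refine h.congr fun k => ?_
        rw [hsn, inner_add_left, real_inner_smul_left]
      have hmono2 : StrictMono (fun k => θ₁ k + 1) := hθ₁.add_const 1
      have h2 : Tendsto (fun k => ⟪s (θ₁ k + 2), σ - σ'⟫) atTop
          (𝓝 ((‖σ‖^2 - ‖σ'‖^2 - (L^2 - L'^2))/2)) := hIC.comp hmono2.tendsto_atTop
      exact tendsto_nhds_unique h1 h2
    have hv1 := hsub θ hθ xc bc hwx1 hwb1
    have hv2 := hsub θ' hθ' xc' bc' hwx2 hwb2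
    have hσeq : σ = σ' := by
      have hzero : ⟪σ - σ', σ - σ'⟫ = 0 := by
        rw [inner_sub_left]
        rw [hσdef, hσ'def] at hv1 hv2 ⊢
        linarith
      have := inner_self_eq_zero.mp hzero
      exact sub_eq_zero.mp this
    have hrel : lam • (bc - bc') = xc' - xc := by
      have h := hσeq
      rw [hσdef, hσ'def] at h
      linear_combination (norm := module) h
    have hxeq : xc = xc' := by
      have hmono : (0:ℝ) ≤ ⟪xc - xc', bc - bc'⟫ := by
        simpa using hB.1 _ hxcB _ hxc'B
      have h2 : lam * ⟪xc - xc', bc - bc'⟫ = -‖xc - xc'‖^2 := by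
        rw [← real_inner_smul_right, hrel, ← neg_sub xc xc', inner_neg_right,
          real_inner_self_eq_norm_sq]
      have h3 : ‖xc - xc'‖^2 ≤ 0 := by nlinarith
      have h4 : ‖xc - xc'‖ = 0 := by nlinarith [norm_nonneg (xc - xc'), sq_nonneg ‖xc - xc'‖]
      exact sub_eq_zero.mp (norm_eq_zero.mp h4)
    have hbeq : bc = bc' := by
      have h : lam • (bc - bc') = 0 := by rw [hrel, hxeq, sub_self]
      rcases smul_eq_zero.mp h with h' | h'
      · exact absurd h' hlam.ne'
      · exact sub_eq_zero.mp h'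
    exact ⟨hxeq, hbeq⟩
  -- fix the cluster point of the whole sequence
  obtain ⟨θ₀, hθ₀, xb0, bb0, hwx₀, hwb₀⟩ := hclus id strictMono_id
  obtain ⟨hxbB, hxbA⟩ := hident θ₀ hθ₀ xb0 bb0 hwx₀ hwb₀
  -- the full (shifted) sequences converge weakly to it
  have hwxfull : ∀ v, Tendsto (fun k => ⟪x (k+2), v⟫) atTop (𝓝 ⟪xb0, v⟫) := by
    intro v
    by_contra hc
    rw [Metric.tendsto_atTop] at hc
    push_neg at hc
    obtain ⟨ε, hε, hfreq⟩ := hc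
    obtain ⟨ψ, hψ, hψP⟩ := extraction_of_frequently_atTop (frequently_atTop.mpr hfreq)
    obtain ⟨θ', hθ', xb', bb', hwx', hwb'⟩ := hclus ψ hψ
    have hcomp : StrictMono (fun k => ψ (θ' k)) := hψ.comp hθ'
    obtain ⟨hxb'B, hxb'A⟩ := hident _ hcomp xb' bb' hwx' hwb'
    have heq := huniq xb0 bb0 xb' bb' hxbB hxbA hxb'B hxb'A ⟨θ₀, hθ₀, hwx₀, hwb₀⟩
      ⟨_, hcomp, hwx', hwb'⟩
    have hconv := hwx' v
    rw [← heq.1] at hconv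
    rw [Metric.tendsto_atTop] at hconv
    obtain ⟨N, hN⟩ := hconv ε hε
    exact absurd (hN N (le_refl N)) (not_lt.mpr (hψP (θ' N)))
  have hwbfull : ∀ v, Tendsto (fun k => ⟪b (k+2), v⟫) atTop (𝓝 ⟪bb0, v⟫) := by
    intro v
    by_contra hc
    rw [Metric.tendsto_atTop] at hc
    push_neg at hc
    obtain ⟨ε, hε, hfreq⟩ := hc
    obtain ⟨ψ, hψ, hψP⟩ := extraction_of_frequently_atTop (frequently_atTop.mpr hfreq)
    obtain ⟨θ', hθ', xb', bb', hwx', hwb'⟩ := hclus ψ hψ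
    have hcomp : StrictMono (fun k => ψ (θ' k)) := hψ.comp hθ'
    obtain ⟨hxb'B, hxb'A⟩ := hident _ hcomp xb' bb' hwx' hwb'
    have heq := huniq xb0 bb0 xb' bb' hxbB hxbA hxb'B hxb'A ⟨θ₀, hθ₀, hwx₀, hwb₀⟩
      ⟨_, hcomp, hwx', hwb'⟩
    have hconv := hwb' v
    rw [← heq.2] at hconv
    rw [Metric.tendsto_atTop] at hconv
    obtain ⟨N, hN⟩ := hconv ε hε
    exact absurd (hN N (le_refl N)) (not_lt.mpr (hψP (θ' N)))
  refine ⟨xb0, bb0, ⟨hxbB, hxbA⟩, ?_, ?_⟩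
  · intro v
    apply (tendsto_add_atTop_iff_nat 2).mp
    have h := (hwxfull v).add (hinner0 _ v hyx0)
    simp only [add_zero] at h
    exact h.congr fun k => by rw [inner_sub_left]; ring
  · intro v
    apply (tendsto_add_atTop_iff_nat 2).mp
    have h := (hwbfull v).sub (hinner0 _ v hab0)
    simp only [sub_zero] at h
    exact h.congr fun k => by rw [inner_add_left, inner_neg_left]; ring
end
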